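/- Let Γ, Λ be finite dimensional algebras and N a Γ-Λ-bimodule that is projective as a right Λ-module. Let U be a finitely generated Gorenstein projective left Λ-module with complete resolution Q^• and cycle modules U^i = ker(∂^i). If N ⊗_Λ U^i ∈ ^⊥Γ for all i ∈ ℤ and each N ⊗_Λ Q^i is a projective left Γ-module, then N ⊗_Λ U is a Gorenstein projective left Γ-module. -/

import Mathlib

noncomputable section

open scoped TensorProduct
open MulOpposite

section BTensorCore

variable (B : Type) [Ring B]

/-- The balancing relations for the tensor product over `B` of a right `B`-module `M`
and a left `B`-module `N`. -/
def BTrel (M N : Type) [AddCommGroup M] [AddCommGroup N] [Module Bᵐᵒᵖ M] [Module B N] :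
    Submodule ℤ (TensorProduct ℤ M N) :=
  Submodule.span ℤ {x | ∃ (m : M) (b : B) (n : N),
    x = (op b • m) ⊗ₜ[ℤ] n - m ⊗ₜ[ℤ] (b • n)}

/-- The balanced tensor product `M ⊗_B N` of a right `B`-module `M` and a left `B`-module `N`,
realized as a quotient of the tensor product of abelian groups. -/
def BTensor (M N : Type) [AddCommGroup M] [AddCommGroup N] [Module Bᵐᵒᵖ M] [Module B N] : Type :=
  TensorProduct ℤ M N ⧸ BTrel B M N

instance (M N : Type) [AddCommGroup M] [AddCommGroup N] [Module Bᵐᵒᵖ M] [Module B N] :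
    AddCommGroup (BTensor B M N) :=
  inferInstanceAs (AddCommGroup (TensorProduct ℤ M N ⧸ BTrel B M N))

variable {M N : Type} [AddCommGroup M] [AddCommGroup N] [Module Bᵐᵒᵖ M] [Module B N]

/-- The class of `m ⊗ n` in `M ⊗_B N`. -/
def BTensor.tmul (m : M) (n : N) : BTensor B M N :=
  Submodule.Quotient.mk (m ⊗ₜ[ℤ] n)

/-- Functoriality of `M ⊗_B -` in the second (left-module) variable. -/
def BTensor.map₂ (Mfix : Type) [AddCommGroup Mfix] [Module Bᵐᵒᵖ Mfix]
    {N' : Type} [AddCommGroup N'] [Module B N'] (f : N →ₗ[B] N') :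
    BTensor B Mfix N →ₗ[ℤ] BTensor B Mfix N' :=
  Submodule.mapQ _ _ (TensorProduct.map LinearMap.id f.toAddMonoidHom.toIntLinearMap) (by
    intro x hx
    induction hx using Submodule.span_induction with
    | mem x h =>
      obtain ⟨m, b, n, rfl⟩ := h
      show _ ∈ BTrel B Mfix N'
      have := Submodule.subset_span (R := ℤ)
        (s := {x : Mfix ⊗[ℤ] N' | ∃ (m : Mfix) (b : B) (n : N'),
          x = (op b • m) ⊗ₜ[ℤ] n - m ⊗ₜ[ℤ] (b • n)}) ⟨m, b, f n, rfl⟩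
      have e : TensorProduct.map LinearMap.id f.toAddMonoidHom.toIntLinearMap
          ((op b • m) ⊗ₜ[ℤ] n - m ⊗ₜ[ℤ] (b • n)) = (op b • m) ⊗ₜ[ℤ] f n - m ⊗ₜ[ℤ] (b • f n) := by
        simp [map_sub, TensorProduct.map_tmul]
      have h2 : (op b • m) ⊗ₜ[ℤ] f n - m ⊗ₜ[ℤ] (b • f n) ∈ BTrel B Mfix N' := this
      rw [← e] at h2
      exact h2
    | zero => exact Submodule.zero_mem _
    | add x y _ _ hx hy => exact Submodule.add_mem _ hx hy
    | smul a x _ hx => exact Submodule.smul_mem _ a hx)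

/-- Functoriality of `- ⊗_B N` in the first (right-module) variable. -/
def BTensor.map₁ (Nfix : Type) [AddCommGroup Nfix] [Module B Nfix]
    {M' : Type} [AddCommGroup M'] [Module Bᵐᵒᵖ M'] (g : M →ₗ[Bᵐᵒᵖ] M') :
    BTensor B M Nfix →ₗ[ℤ] BTensor B M' Nfix :=
  Submodule.mapQ _ _ (TensorProduct.map g.toAddMonoidHom.toIntLinearMap LinearMap.id) (by
    intro x hx
    induction hx using Submodule.span_induction with
    | mem x h =>
      obtain ⟨m, b, n, rfl⟩ := h
      show _ ∈ BTrel B M' Nfix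
      have := Submodule.subset_span (R := ℤ)
        (s := {x : M' ⊗[ℤ] Nfix | ∃ (m : M') (b : B) (n : Nfix),
          x = (op b • m) ⊗ₜ[ℤ] n - m ⊗ₜ[ℤ] (b • n)}) ⟨g m, b, n, rfl⟩
      have e : TensorProduct.map g.toAddMonoidHom.toIntLinearMap LinearMap.id
          ((op b • m) ⊗ₜ[ℤ] n - m ⊗ₜ[ℤ] (b • n)) = (op b • g m) ⊗ₜ[ℤ] n - g m ⊗ₜ[ℤ] (b • n) := by
        simp [map_sub, TensorProduct.map_tmul]
      have h2 : (op b • g m) ⊗ₜ[ℤ] n - g m ⊗ₜ[ℤ] (b • n) ∈ BTrel B M' Nfix := this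
      rw [← e] at h2
      exact h2
    | zero => exact Submodule.zero_mem _
    | add x y _ _ hx hy => exact Submodule.add_mem _ hx hy
    | smul a x _ hx => exact Submodule.smul_mem _ a hx)

theorem BTensor.map₂_mk (Mfix : Type) [AddCommGroup Mfix] [Module Bᵐᵒᵖ Mfix]
    {N' : Type} [AddCommGroup N'] [Module B N'] (f : N →ₗ[B] N') (y : Mfix ⊗[ℤ] N) :
    BTensor.map₂ B Mfix f (Submodule.Quotient.mk y) =
      Submodule.Quotient.mk
        (TensorProduct.map LinearMap.id f.toAddMonoidHom.toIntLinearMap y) :=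
  by rfl

theorem BTensor.map₁_mk (Nfix : Type) [AddCommGroup Nfix] [Module B Nfix]
    {M' : Type} [AddCommGroup M'] [Module Bᵐᵒᵖ M'] (g : M →ₗ[Bᵐᵒᵖ] M') (y : M ⊗[ℤ] Nfix) :
    BTensor.map₁ B Nfix g (Submodule.Quotient.mk y) =
      Submodule.Quotient.mk
        (TensorProduct.map g.toAddMonoidHom.toIntLinearMap LinearMap.id y) :=
  by rfl

end BTensorCore

section LeftRight

variable (B : Type) [Ring B] (Γ : Type) [Ring Γ]
variable (M N : Type) [AddCommGroup M] [AddCommGroup N] [Module Bᵐᵒᵖ M] [Module B N]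

section Left
variable [Module Γ M] [SMulCommClass Γ Bᵐᵒᵖ M]

/-- left scalar multiplication on `M`, as a right-`B`-linear map. -/
def lsmulRightLinear (g : Γ) : M →ₗ[Bᵐᵒᵖ] M where
  toFun := (g • ·)
  map_add' := smul_add g
  map_smul' := fun b m => by exact smul_comm g b m

instance BTensor.instSMulLeft : SMul Γ (BTensor B M N) :=
  ⟨fun g => BTensor.map₁ B N (lsmulRightLinear B Γ M g)⟩

instance BTensor.leftModule : Module Γ (BTensor B M N) := by
  refine Function.Surjective.module Γ
    (⟨⟨(Submodule.Quotient.mk : TensorProduct ℤ M N → BTensor B M N), rfl⟩, fun x y => rfl⟩)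
    (Submodule.Quotient.mk_surjective _) ?_
  intro g y
  show Submodule.Quotient.mk (g • y) = BTensor.map₁ B N (lsmulRightLinear B Γ M g)
    (Submodule.Quotient.mk y)
  rw [BTensor.map₁_mk]
  congr 1

end Left

section Right
variable [Module Γᵐᵒᵖ N] [SMulCommClass B Γᵐᵒᵖ N]

/-- right scalar multiplication on `N`, as a left-`B`-linear map. -/
def rsmulLeftLinear (g : Γᵐᵒᵖ) : N →ₗ[B] N where
  toFun := (g • ·)
  map_add' := smul_add g
  map_smul' := fun b n => by exact (smul_comm b g n).symm

instance BTensor.instSMulRight : SMul Γᵐᵒᵖ (BTensor B M N) :=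
  ⟨fun g => BTensor.map₂ B M (rsmulLeftLinear B Γ N g)⟩

instance BTensor.rightModule : Module Γᵐᵒᵖ (BTensor B M N) := by
  refine Function.Surjective.module Γᵐᵒᵖ
    (⟨⟨fun (y : N ⊗[ℤ] M) => (Submodule.Quotient.mk (TensorProduct.comm ℤ N M y) :
        BTensor B M N), by simp; rfl⟩, fun x y => by simp; rfl⟩) ?_ ?_
  · intro x
    obtain ⟨y, rfl⟩ := Submodule.Quotient.mk_surjective _ x
    exact ⟨(TensorProduct.comm ℤ N M).symm y, by
      show Submodule.Quotient.mk (TensorProduct.comm ℤ N M ((TensorProduct.comm ℤ N M).symm y)) = _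
      rw [LinearEquiv.apply_symm_apply]⟩
  · intro g y
    show Submodule.Quotient.mk ((TensorProduct.comm ℤ N M) (g • y)) =
      BTensor.map₂ B M (rsmulLeftLinear B Γ N g)
        (Submodule.Quotient.mk ((TensorProduct.comm ℤ N M) y))
    rw [BTensor.map₂_mk]
    congr 1
    induction y using TensorProduct.induction_on with
    | zero => simp
    | tmul n m =>
        simp [TensorProduct.smul_tmul', rsmulLeftLinear, TensorProduct.comm_tmul]
    | add x y hx hy => simp [smul_add, hx, hy]

end Right

instance BTensor.smulCommClass [Module Γ M] [SMulCommClass Γ Bᵐᵒᵖ M]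
    [Module Γᵐᵒᵖ N] [SMulCommClass B Γᵐᵒᵖ N] :
    SMulCommClass Γ Γᵐᵒᵖ (BTensor B M N) := by
  constructor
  intro g og x
  obtain ⟨y, rfl⟩ := Submodule.Quotient.mk_surjective _ x
  show (BTensor.map₁ B N (lsmulRightLinear B Γ M g)) ((BTensor.map₂ B M (rsmulLeftLinear B Γ N og)) _)
    = (BTensor.map₂ B M (rsmulLeftLinear B Γ N og)) ((BTensor.map₁ B N (lsmulRightLinear B Γ M g)) _)
  rw [BTensor.map₂_mk, BTensor.map₁_mk, BTensor.map₁_mk, BTensor.map₂_mk]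
  congr 1
  induction y using TensorProduct.induction_on with
  | zero => simp
  | tmul m n => simp [lsmulRightLinear, rsmulLeftLinear]
  | add x y hx hy => simp [hx, hy]

end LeftRight

section Bimod

variable (B : Type) [Ring B]

/-- A `B`-`B`-bimodule, packaged. -/
structure BBimod : Type 1 where
  X : Type
  [addcg : AddCommGroup X]
  [left : Module B X]
  [right : Module Bᵐᵒᵖ X]
  [comm : SMulCommClass B Bᵐᵒᵖ X]

attribute [instance] BBimod.addcg BBimod.left BBimod.right BBimod.comm

variable {B}

/-- tensor product of bimodules over `B`. -/
def BBimod.tensor (M N : BBimod B) : BBimod B where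
  X := BTensor B M.X N.X

/-- `M.pow j` is the tensor power `M^{⊗_B (j+1)}`. -/
def BBimod.pow (M : BBimod B) : ℕ → BBimod B
  | 0 => M
  | (j + 1) => M.tensor (M.pow j)

end Bimod

section Tor

variable (R : Type) [Ring R]

/-- `P`, `d`, `ε` form a projective resolution of the left `R`-module `N`. -/
def IsProjResolution (N : Type) [AddCommGroup N] [Module R N]
    (P : ℕ → ModuleCat R) (d : ∀ i, P (i + 1) ⟶ P i) (ε : P 0 ⟶ ModuleCat.of R N) : Prop :=
  (∀ i, Module.Projective R (P i)) ∧ Function.Surjective ε ∧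
    LinearMap.range (d 0).hom = LinearMap.ker ε.hom ∧
    ∀ i, LinearMap.range (d (i + 1)).hom = LinearMap.ker (d i).hom

/-- `Tor_i^R(M, N) = 0` for all `i ≥ 1`: for every projective resolution `P⬝` of `N`, the
complex `M ⊗_R P⬝` is exact in all positive degrees. -/
def TorVanishesPos (M : Type) [AddCommGroup M] [Module Rᵐᵒᵖ M]
    (N : Type) [AddCommGroup N] [Module R N] : Prop :=
  ∀ (P : ℕ → ModuleCat R) (d : ∀ i, P (i + 1) ⟶ P i) (ε : P 0 ⟶ ModuleCat.of R N),
    IsProjResolution R N P d ε →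
    ∀ i, LinearMap.range (BTensor.map₂ R M (d (i + 1)).hom) =
      LinearMap.ker (BTensor.map₂ R M (d i).hom)

end Tor

section ExtGp

variable (R : Type) [Ring R]

/-- `Ext_R^{i+1}(U, Y) = 0`: for every projective resolution of `U`, the induced complex of
`Hom` groups is exact at the spot computing `Ext^{i+1}`. -/
def ExtVanishSucc (U : Type) [AddCommGroup U] [Module R U]
    (Y : Type) [AddCommGroup Y] [Module R Y] (i : ℕ) : Prop :=
  ∀ (P : ℕ → ModuleCat R) (d : ∀ n, P (n + 1) ⟶ P n) (ε : P 0 ⟶ ModuleCat.of R U),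
    IsProjResolution R U P d ε →
    ∀ g : P (i + 1) →ₗ[R] Y, g.comp (d (i + 1)).hom = 0 →
      ∃ h : P i →ₗ[R] Y, h.comp (d i).hom = g

/-- `U` is a Gorenstein projective `R`-module: it is (isomorphic to) a cycle module of a
complete projective resolution, i.e. an exact complex of projectives which stays exact
under `Hom_R(-, R)`. -/
def IsGorensteinProj (U : Type) [AddCommGroup U] [Module R U] : Prop :=
  ∃ (P : ℤ → ModuleCat.{0} R) (d : ∀ i, P i ⟶ P (i + 1)),
    (∀ i, Module.Projective R (P i)) ∧
    (∀ i, LinearMap.range (d i).hom = LinearMap.ker (d (i + 1)).hom) ∧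
    (∀ (i : ℤ) (g : P (i + 1) →ₗ[R] R), g.comp (d i).hom = 0 ↔
      ∃ h : P (i + 1 + 1) →ₗ[R] R, h.comp (d (i + 1)).hom = g) ∧
    Nonempty (U ≃ₗ[R] LinearMap.ker (d 0).hom)

/-- `Y ∈ Gproj(R)^⊥`: `Ext_R^i(U, Y) = 0` for every finitely generated Gorenstein
projective `U` and every `i ≥ 1`. -/
def MemGprojPerp (Y : Type) [AddCommGroup Y] [Module R Y] : Prop :=
  ∀ (U : Type) [AddCommGroup U] [Module R U], Module.Finite R U → IsGorensteinProj R U →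
    ∀ i : ℕ, ExtVanishSucc R U Y i

/-- `X ∈ ^⊥R`: `Ext_R^i(X, R) = 0` for all `i ≥ 1`. -/
def MemPerpRing (X : Type) [AddCommGroup X] [Module R X] : Prop :=
  ∀ i : ℕ, ExtVanishSucc R X R i

/-- projective dimension at most `n`. -/
def pdLE : ℕ → ModuleCat R → Prop
  | 0, M => Module.Projective R M
  | (n + 1), M => ∃ (P : ModuleCat R) (f : P ⟶ M),
      Module.Projective R P ∧ Function.Surjective f ∧ pdLE n (ModuleCat.of R (LinearMap.ker f.hom))

/-- `M` has finite projective dimension over `R`. -/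
def HasFinProjDim (M : Type) [AddCommGroup M] [Module R M] : Prop :=
  ∃ n, pdLE R n (ModuleCat.of R M)

end ExtGp

section Aux18

variable {Λ : Type} [Ring Λ]

section MapLemmas

variable {NN NN' NN'' : Type} [AddCommGroup NN] [Module Λᵐᵒᵖ NN]
  [AddCommGroup NN'] [Module Λᵐᵒᵖ NN'] [AddCommGroup NN''] [Module Λᵐᵒᵖ NN'']
variable {A A' A'' : Type} [AddCommGroup A] [Module Λ A] [AddCommGroup A'] [Module Λ A']
  [AddCommGroup A''] [Module Λ A'']

theorem m2_comp_apply (f : A →ₗ[Λ] A') (g : A' →ₗ[Λ] A'') (x : BTensor Λ NN A) :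
    BTensor.map₂ Λ NN (g ∘ₗ f) x = BTensor.map₂ Λ NN g (BTensor.map₂ Λ NN f x) := by
  obtain ⟨y, rfl⟩ := Submodule.Quotient.mk_surjective _ x
  rw [BTensor.map₂_mk, BTensor.map₂_mk, BTensor.map₂_mk]
  congr 1
  induction y using TensorProduct.induction_on with
  | zero => simp
  | tmul m n => simp
  | add a b ha hb => simp [ha, hb]

theorem m2_id_apply (x : BTensor Λ NN A) :
    BTensor.map₂ Λ NN (LinearMap.id : A →ₗ[Λ] A) x = x := by
  obtain ⟨y, rfl⟩ := Submodule.Quotient.mk_surjective _ x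
  rw [BTensor.map₂_mk]
  congr 1
  induction y using TensorProduct.induction_on with
  | zero => simp
  | tmul m n => simp
  | add a b ha hb => simp [ha, hb]

theorem m2_zero_apply (x : BTensor Λ NN A) :
    BTensor.map₂ Λ NN (0 : A →ₗ[Λ] A') x = 0 := by
  obtain ⟨y, rfl⟩ := Submodule.Quotient.mk_surjective _ x
  rw [BTensor.map₂_mk]
  rw [show Submodule.Quotient.mk (p := BTrel Λ NN A') (TensorProduct.map LinearMap.id
    (0 : A →ₗ[Λ] A').toAddMonoidHom.toIntLinearMap y) = Submodule.Quotient.mk 0 from ?_]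
  · rfl
  congr 1
  induction y using TensorProduct.induction_on with
  | zero => simp
  | tmul m n => simp
  | add a b ha hb => simp [ha, hb]

theorem m1_comp_apply (g : NN →ₗ[Λᵐᵒᵖ] NN') (g' : NN' →ₗ[Λᵐᵒᵖ] NN'') (x : BTensor Λ NN A) :
    BTensor.map₁ Λ A (g' ∘ₗ g) x = BTensor.map₁ Λ A g' (BTensor.map₁ Λ A g x) := by
  obtain ⟨y, rfl⟩ := Submodule.Quotient.mk_surjective _ x
  rw [BTensor.map₁_mk, BTensor.map₁_mk, BTensor.map₁_mk]
  congr 1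
  induction y using TensorProduct.induction_on with
  | zero => simp
  | tmul m n => simp
  | add a b ha hb => simp [ha, hb]

theorem m1_id_apply (x : BTensor Λ NN A) :
    BTensor.map₁ Λ A (LinearMap.id : NN →ₗ[Λᵐᵒᵖ] NN) x = x := by
  obtain ⟨y, rfl⟩ := Submodule.Quotient.mk_surjective _ x
  rw [BTensor.map₁_mk]
  congr 1
  induction y using TensorProduct.induction_on with
  | zero => simp
  | tmul m n => simp
  | add a b ha hb => simp [ha, hb]

theorem m2_m1_comm (f : A →ₗ[Λ] A') (g : NN →ₗ[Λᵐᵒᵖ] NN') (x : BTensor Λ NN A) :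
    BTensor.map₂ Λ NN' f (BTensor.map₁ Λ A g x) =
      BTensor.map₁ Λ A' g (BTensor.map₂ Λ NN f x) := by
  obtain ⟨y, rfl⟩ := Submodule.Quotient.mk_surjective _ x
  rw [BTensor.map₁_mk, BTensor.map₂_mk, BTensor.map₂_mk, BTensor.map₁_mk]
  congr 1
  induction y using TensorProduct.induction_on with
  | zero => simp
  | tmul m n => simp
  | add a b ha hb => simp [ha, hb]

theorem m2_surjective (f : A →ₗ[Λ] A') (hf : Function.Surjective f) :
    Function.Surjective (BTensor.map₂ Λ NN f) := by
  intro x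
  obtain ⟨y, rfl⟩ := Submodule.Quotient.mk_surjective _ x
  obtain ⟨t, ht⟩ := LinearMap.lTensor_surjective (R := ℤ) NN
    (g := f.toAddMonoidHom.toIntLinearMap) (fun a' => by
      obtain ⟨a, ha⟩ := hf a'; exact ⟨a, by simpa using ha⟩) y
  refine ⟨Submodule.Quotient.mk t, ?_⟩
  rw [BTensor.map₂_mk]
  rw [show TensorProduct.map LinearMap.id f.toAddMonoidHom.toIntLinearMap t = y from ht]

end MapLemmas

section Free

variable (Λ) in
/-- the smul-and-single bilinear map underlying `φ`. -/
def freePhiAux (ι M : Type) [AddCommGroup M] [Module Λ M] :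
    (ι →₀ Λᵐᵒᵖ) →ₗ[ℤ] M →ₗ[ℤ] (ι →₀ M) :=
  Finsupp.lsum ℤ fun n => AddMonoidHom.toIntLinearMap
    { toFun := fun lam => (Finsupp.lsingle n : M →ₗ[ℤ] (ι →₀ M)).comp
        (AddMonoidHom.toIntLinearMap
          { toFun := fun m => lam.unop • m
            map_zero' := smul_zero _
            map_add' := fun a b => smul_add _ a b })
      map_zero' := by ext m; simp
      map_add' := fun a b => by ext m; simp [add_smul] }

theorem freePhiAux_single {ι M : Type} [AddCommGroup M] [Module Λ M]
    (n : ι) (lam : Λᵐᵒᵖ) (m : M) :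
    freePhiAux Λ ι M (Finsupp.single n lam) m = Finsupp.single n (lam.unop • m) := by
  simp [freePhiAux, Finsupp.lsum_single]

theorem freePhiAux_apply {ι M : Type} [AddCommGroup M] [Module Λ M]
    (v : ι →₀ Λᵐᵒᵖ) (m : M) :
    freePhiAux Λ ι M v m = v.sum fun n lam => Finsupp.single n (lam.unop • m) := by
  rw [freePhiAux, Finsupp.lsum_apply, Finsupp.sum, Finsupp.sum, LinearMap.sum_apply]
  rfl

variable (Λ) in
/-- `φ : (ι →₀ Λᵐᵒᵖ) ⊗_Λ M → (ι →₀ M)`. -/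
def freePhi (ι M : Type) [AddCommGroup M] [Module Λ M] :
    BTensor Λ (ι →₀ Λᵐᵒᵖ) M →ₗ[ℤ] (ι →₀ M) :=
  Submodule.liftQ _ (TensorProduct.lift (freePhiAux Λ ι M)) (by
    rw [BTrel, Submodule.span_le]
    rintro x ⟨v, b, m, rfl⟩
    show TensorProduct.lift (freePhiAux Λ ι M) ((op b • v) ⊗ₜ[ℤ] m - v ⊗ₜ[ℤ] (b • m)) = 0
    simp only [SetLike.mem_coe, LinearMap.mem_ker, map_sub, TensorProduct.lift.tmul,
      sub_eq_zero]
    rw [freePhiAux_apply, freePhiAux_apply]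
    rw [Finsupp.sum_smul_index' (by intro n; simp)]
    refine Finsupp.sum_congr fun n _ => ?_
    congr 1
    rw [show (op b • (v n)).unop = (v n).unop * b by
      rw [smul_eq_mul, MulOpposite.unop_mul, MulOpposite.unop_op]]
    rw [mul_smul])

theorem freePhi_mk {ι M : Type} [AddCommGroup M] [Module Λ M]
    (y : (ι →₀ Λᵐᵒᵖ) ⊗[ℤ] M) :
    freePhi Λ ι M (Submodule.Quotient.mk y) = TensorProduct.lift (freePhiAux Λ ι M) y :=
  rfl

variable (Λ) in
/-- `ψ : (ι →₀ M) → (ι →₀ Λᵐᵒᵖ) ⊗_Λ M`. -/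
def freePsi (ι M : Type) [AddCommGroup M] [Module Λ M] :
    (ι →₀ M) →ₗ[ℤ] BTensor Λ (ι →₀ Λᵐᵒᵖ) M :=
  Finsupp.lsum ℤ fun n =>
    (BTrel Λ (ι →₀ Λᵐᵒᵖ) M).mkQ ∘ₗ (TensorProduct.mk ℤ (ι →₀ Λᵐᵒᵖ) M (Finsupp.single n 1))

theorem freePsi_single {ι M : Type} [AddCommGroup M] [Module Λ M] (n : ι) (m : M) :
    freePsi Λ ι M (Finsupp.single n m) =
      Submodule.Quotient.mk (Finsupp.single n (1 : Λᵐᵒᵖ) ⊗ₜ[ℤ] m) := by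
  simp [freePsi, Finsupp.lsum_single]
  rfl

theorem freePhi_psi {ι M : Type} [AddCommGroup M] [Module Λ M] (w : ι →₀ M) :
    freePhi Λ ι M (freePsi Λ ι M w) = w := by
  induction w using Finsupp.induction_linear with
  | zero => simp
  | add a b ha hb => simp [ha, hb]
  | single n m =>
    rw [freePsi_single, freePhi_mk, TensorProduct.lift.tmul, freePhiAux_single]
    simp

theorem freePsi_phi {ι M : Type} [AddCommGroup M] [Module Λ M]
    (x : BTensor Λ (ι →₀ Λᵐᵒᵖ) M) :
    freePsi Λ ι M (freePhi Λ ι M x) = x := by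
  obtain ⟨y, rfl⟩ := Submodule.Quotient.mk_surjective _ x
  induction y using TensorProduct.induction_on with
  | zero => exact (congrArg _ (map_zero (freePhi Λ ι M))).trans (map_zero _)
  | add a b ha hb =>
    rw [show (Submodule.Quotient.mk (p := BTrel Λ (ι →₀ Λᵐᵒᵖ) M) (a + b) : BTensor Λ (ι →₀ Λᵐᵒᵖ) M) =
      (Submodule.Quotient.mk a : BTensor Λ (ι →₀ Λᵐᵒᵖ) M) + Submodule.Quotient.mk b from rfl]
    exact (congrArg (freePsi Λ ι M) (map_add (freePhi Λ ι M) _ _)).trans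
      ((map_add _ _ _).trans (congrArg₂ (· + ·) ha hb))
  | tmul v m =>
    rw [freePhi_mk, TensorProduct.lift.tmul, freePhiAux_apply]
    rw [Finsupp.sum, map_sum]
    have key : ∀ n : ι, freePsi Λ ι M (Finsupp.single n ((v n).unop • m)) =
        Submodule.Quotient.mk (Finsupp.single n (v n) ⊗ₜ[ℤ] m) := by
      intro n
      rw [freePsi_single]
      apply (Submodule.Quotient.eq _).mpr
      have hgen : (Finsupp.single n (v n) : ι →₀ Λᵐᵒᵖ) ⊗ₜ[ℤ] m -
          (Finsupp.single n (1 : Λᵐᵒᵖ)) ⊗ₜ[ℤ] ((v n).unop • m) ∈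
            BTrel Λ (ι →₀ Λᵐᵒᵖ) M := by
        refine Submodule.subset_span ⟨Finsupp.single n (1 : Λᵐᵒᵖ), (v n).unop, m, ?_⟩
        congr 2
        rw [Finsupp.smul_single]
        congr 1
        rw [smul_eq_mul, mul_one, MulOpposite.op_unop]
      have hneg := Submodule.neg_mem _ hgen
      rw [neg_sub] at hneg
      exact hneg
    rw [Finset.sum_congr rfl fun n _ => key n]
    rw [show (∑ n ∈ v.support, Submodule.Quotient.mk ((Finsupp.single n (v n)) ⊗ₜ[ℤ] m) :
        BTensor Λ (ι →₀ Λᵐᵒᵖ) M) =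
      Submodule.Quotient.mk (∑ n ∈ v.support, (Finsupp.single n (v n)) ⊗ₜ[ℤ] m) from
        (map_sum (BTrel Λ (ι →₀ Λᵐᵒᵖ) M).mkQ _ _).symm]
    congr 1
    rw [← TensorProduct.sum_tmul]
    congr 1
    exact v.sum_single

theorem freePsi_injective {ι M : Type} [AddCommGroup M] [Module Λ M] :
    Function.Injective (freePsi Λ ι M) :=
  Function.LeftInverse.injective (g := freePhi Λ ι M) (fun w => freePhi_psi w)

theorem freePsi_natural {ι M M' : Type} [AddCommGroup M] [Module Λ M]
    [AddCommGroup M'] [Module Λ M'] (f : M →ₗ[Λ] M') (w : ι →₀ M) :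
    BTensor.map₂ Λ (ι →₀ Λᵐᵒᵖ) f (freePsi Λ ι M w) =
      freePsi Λ ι M' (w.mapRange f f.map_zero) := by
  induction w using Finsupp.induction_linear with
  | zero => simp
  | add a b ha hb =>
    rw [map_add, map_add, ha, hb, ← map_add]
    congr 1
    ext n
    simp
  | single n m =>
    rw [freePsi_single, BTensor.map₂_mk, Finsupp.mapRange_single, freePsi_single]
    rfl

theorem mapRange_exact {ι M M' M'' : Type} [AddCommGroup M] [Module Λ M]
    [AddCommGroup M'] [Module Λ M'] [AddCommGroup M''] [Module Λ M'']
    (f : M →ₗ[Λ] M') (g : M' →ₗ[Λ] M'')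
    (hfg : LinearMap.range f = LinearMap.ker g) (w : ι →₀ M')
    (hw : w.mapRange g g.map_zero = 0) :
    ∃ u : ι →₀ M, u.mapRange f f.map_zero = w := by
  have hmem : ∀ n : ι, ∃ a : M, f a = w n := by
    intro n
    have : g (w n) = 0 := by
      have := congrArg (fun z => z n) hw
      simpa using this
    have : w n ∈ LinearMap.ker g := this
    rw [← hfg] at this
    exact this
  classical
  refine ⟨Finsupp.onFinset w.support
    (fun n => if h : w n = 0 then 0 else Classical.choose (hmem n)) ?_, ?_⟩
  · intro n hn
    rw [Finsupp.mem_support_iff]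
    intro h0
    exact hn (dif_pos h0)
  · ext n
    simp only [Finsupp.mapRange_apply, Finsupp.onFinset_apply]
    by_cases h0 : w n = 0
    · rw [dif_pos h0, map_zero, h0]
    · rw [dif_neg h0]
      exact Classical.choose_spec (hmem n)

theorem free_exact {ι M M' M'' : Type} [AddCommGroup M] [Module Λ M]
    [AddCommGroup M'] [Module Λ M'] [AddCommGroup M''] [Module Λ M'']
    (f : M →ₗ[Λ] M') (g : M' →ₗ[Λ] M'')
    (hfg : LinearMap.range f = LinearMap.ker g)
    (x : BTensor Λ (ι →₀ Λᵐᵒᵖ) M') (hx : BTensor.map₂ Λ (ι →₀ Λᵐᵒᵖ) g x = 0) :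
    ∃ y, BTensor.map₂ Λ (ι →₀ Λᵐᵒᵖ) f y = x := by
  set w := freePhi Λ ι M' x with hwdef
  have hx' : x = freePsi Λ ι M' w := (freePsi_phi x).symm
  have h1 : freePsi Λ ι M'' (Finsupp.mapRange (⇑g) (map_zero g) w) = 0 := by
    rw [← freePsi_natural, ← hx', hx]
  have h2 : Finsupp.mapRange (⇑g) (map_zero g) w = 0 :=
    freePsi_injective (ι := ι) (M := M'') (by rw [h1, map_zero])
  obtain ⟨u, hu⟩ := mapRange_exact f g hfg w h2
  refine ⟨freePsi Λ ι M u, ?_⟩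
  rw [freePsi_natural, hu, ← hx']

end Free

section Flat

variable {NN : Type} [AddCommGroup NN] [Module Λᵐᵒᵖ NN]
variable {A B C : Type} [AddCommGroup A] [Module Λ A] [AddCommGroup B] [Module Λ B]
  [AddCommGroup C] [Module Λ C]

/-- **Flatness of a projective right module**: tensoring preserves exactness. -/
theorem flat_exact (hproj : Module.Projective Λᵐᵒᵖ NN)
    (f : A →ₗ[Λ] B) (g : B →ₗ[Λ] C) (hfg : LinearMap.range f = LinearMap.ker g) :
    LinearMap.range (BTensor.map₂ Λ NN f) = LinearMap.ker (BTensor.map₂ Λ NN g) := by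
  have hgf : g ∘ₗ f = 0 := by
    ext a
    have : f a ∈ LinearMap.ker g := hfg ▸ LinearMap.mem_range_self f a
    simpa using this
  apply le_antisymm
  · rintro x ⟨y, rfl⟩
    rw [LinearMap.mem_ker, ← m2_comp_apply, hgf, m2_zero_apply]
  · intro x hx
    obtain ⟨s, hs⟩ := Module.projective_def.mp hproj
    set tot : (NN →₀ Λᵐᵒᵖ) →ₗ[Λᵐᵒᵖ] NN := Finsupp.linearCombination Λᵐᵒᵖ (id : NN → NN)
      with htot
    have hx0 : BTensor.map₂ Λ NN g x = 0 := hx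
    have h1 : BTensor.map₂ Λ (NN →₀ Λᵐᵒᵖ) g (BTensor.map₁ Λ B s x) = 0 := by
      rw [m2_m1_comm, hx0, map_zero]
    obtain ⟨y, hy⟩ := free_exact (ι := NN) f g hfg _ h1
    have hts : tot ∘ₗ s = LinearMap.id := LinearMap.ext fun n => hs n
    have hxx : BTensor.map₁ Λ B tot (BTensor.map₁ Λ B s x) = x := by
      rw [← m1_comp_apply, hts, m1_id_apply]
    refine ⟨BTensor.map₁ Λ A tot y, ?_⟩
    rw [m2_m1_comm f tot y, hy, hxx]

theorem flat_injective (hproj : Module.Projective Λᵐᵒᵖ NN)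
    (f : A →ₗ[Λ] B) (hf : LinearMap.ker f = ⊥) :
    Function.Injective (BTensor.map₂ Λ NN f) := by
  rw [← LinearMap.ker_eq_bot]
  have h := flat_exact (A := PUnit) hproj (0 : PUnit →ₗ[Λ] A) f
    (by rw [LinearMap.range_zero, hf])
  rw [← h]
  apply le_antisymm _ bot_le
  rintro x ⟨y, rfl⟩
  rw [Submodule.mem_bot]
  exact m2_zero_apply y

end Flat

section Gamma

variable {Γ : Type} [Ring Γ] {NN : Type} [AddCommGroup NN] [Module Λᵐᵒᵖ NN]
  [Module Γ NN] [SMulCommClass Γ Λᵐᵒᵖ NN]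
variable {A B C : Type} [AddCommGroup A] [Module Λ A] [AddCommGroup B] [Module Λ B]
  [AddCommGroup C] [Module Λ C]

variable (Γ) in
/-- the `Γ`-linear version of `BTensor.map₂`. -/
def m2G (f : A →ₗ[Λ] B) : BTensor Λ NN A →ₗ[Γ] BTensor Λ NN B where
  toFun := BTensor.map₂ Λ NN f
  map_add' := map_add _
  map_smul' := fun γ x => by
    show BTensor.map₂ Λ NN f (BTensor.map₁ Λ A (lsmulRightLinear Λ Γ NN γ) x) =
      BTensor.map₁ Λ B (lsmulRightLinear Λ Γ NN γ) (BTensor.map₂ Λ NN f x)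
    exact m2_m1_comm f _ x

theorem m2G_apply (f : A →ₗ[Λ] B) (x : BTensor Λ NN A) :
    m2G Γ (NN := NN) f x = BTensor.map₂ Λ NN f x := rfl

theorem flat_exact_G (hproj : Module.Projective Λᵐᵒᵖ NN)
    (f : A →ₗ[Λ] B) (g : B →ₗ[Λ] C) (hfg : LinearMap.range f = LinearMap.ker g) :
    LinearMap.range (m2G Γ (NN := NN) f) = LinearMap.ker (m2G Γ (NN := NN) g) := by
  have hz := flat_exact hproj f g hfg
  ext x
  constructor
  · rintro ⟨y, rfl⟩
    have h1 : BTensor.map₂ Λ NN f y ∈ LinearMap.ker (BTensor.map₂ Λ NN g) := by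
      rw [← hz]
      exact ⟨y, rfl⟩
    have h2 : BTensor.map₂ Λ NN g (BTensor.map₂ Λ NN f y) = 0 :=
      (LinearMap.mem_ker (f := BTensor.map₂ Λ NN g)).mp h1
    exact LinearMap.mem_ker (f := m2G Γ (NN := NN) g) |>.mpr h2
  · intro hx
    have hx' : BTensor.map₂ Λ NN g x = 0 :=
      (LinearMap.mem_ker (f := m2G Γ (NN := NN) g)).mp hx
    have h1 : x ∈ LinearMap.range (BTensor.map₂ Λ NN f) := by
      rw [hz]
      exact LinearMap.mem_ker (f := BTensor.map₂ Λ NN g) |>.mpr hx'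
    obtain ⟨y, hy⟩ := h1
    exact ⟨y, hy⟩

theorem flat_injective_G (hproj : Module.Projective Λᵐᵒᵖ NN)
    (f : A →ₗ[Λ] B) (hf : LinearMap.ker f = ⊥) :
    Function.Injective (m2G Γ (NN := NN) f) :=
  fun a b h => flat_injective hproj f hf h

theorem m2G_surjective (f : A →ₗ[Λ] B) (hf : Function.Surjective f) :
    Function.Surjective (m2G Γ (NN := NN) f) :=
  fun x => m2_surjective f hf x

theorem m2G_comp_apply (f : A →ₗ[Λ] B) (g : B →ₗ[Λ] C) (x : BTensor Λ NN A) :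
    m2G Γ (NN := NN) (g ∘ₗ f) x = m2G Γ (NN := NN) g (m2G Γ (NN := NN) f x) :=
  m2_comp_apply f g x

variable (Γ) in
/-- the `Γ`-linear equivalence induced by a `Λ`-linear equivalence. -/
def m2GE (e : A ≃ₗ[Λ] B) : BTensor Λ NN A ≃ₗ[Γ] BTensor Λ NN B :=
  LinearEquiv.ofLinear (m2G Γ (NN := NN) e.toLinearMap) (m2G Γ (NN := NN) e.symm.toLinearMap)
    (LinearMap.ext fun x => by
      show m2G Γ (NN := NN) e.toLinearMap (m2G Γ (NN := NN) e.symm.toLinearMap x) = x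
      rw [← m2G_comp_apply,
        show e.toLinearMap ∘ₗ e.symm.toLinearMap = LinearMap.id from
          LinearMap.ext fun a => e.apply_symm_apply a]
      exact m2_id_apply x)
    (LinearMap.ext fun x => by
      show m2G Γ (NN := NN) e.symm.toLinearMap (m2G Γ (NN := NN) e.toLinearMap x) = x
      rw [← m2G_comp_apply,
        show e.symm.toLinearMap ∘ₗ e.toLinearMap = LinearMap.id from
          LinearMap.ext fun a => e.symm_apply_apply a]
      exact m2_id_apply x)

end Gamma

section MCast

variable {R : Type} [Semiring R] {T : ℤ → Type} [∀ i, AddCommGroup (T i)]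
  [∀ i, Module R (T i)]

/-- transport along an equality of indices. -/
def mcast {a b : ℤ} (h : a = b) : T a ≃ₗ[R] T b := h ▸ LinearEquiv.refl R (T a)

theorem mcast_rfl (a : ℤ) : mcast (T := T) (rfl : a = a) = LinearEquiv.refl R (T a) := rfl

end MCast

end Aux18

/-- Let `N` be a `Γ`-`Λ`-bimodule, projective as a right `Λ`-module, and let
`U` be a finitely generated Gorenstein projective left `Λ`-module with complete resolution
`Q⬝` and cycle modules `U^i = ker(dd i)`.  If `N ⊗_Λ U^i ∈ ^⊥Γ` for all `i` and each
`N ⊗_Λ Q^i` is a projective left `Γ`-module, then `N ⊗_Λ U` is a Gorenstein projective left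
`Γ`-module. -/
theorem statement18 (k : Type) [Field k] (Γ Λ : Type) [Ring Γ] [Ring Λ]
    [Algebra k Γ] [Algebra k Λ] [FiniteDimensional k Γ] [FiniteDimensional k Λ]
    (N : Type) [AddCommGroup N] [Module Γ N] [Module Λᵐᵒᵖ N] [SMulCommClass Γ Λᵐᵒᵖ N]
    (hN : Module.Projective Λᵐᵒᵖ N)
    (U : Type) [AddCommGroup U] [Module Λ U] (hUfg : Module.Finite Λ U)
    (Q : ℤ → ModuleCat.{0} Λ) (dd : ∀ i, Q i ⟶ Q (i + 1))
    (hQproj : ∀ i, Module.Projective Λ (Q i))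
    (hQex : ∀ i, LinearMap.range (dd i).hom = LinearMap.ker (dd (i + 1)).hom)
    (hQdual : ∀ (i : ℤ) (g : Q (i + 1) →ₗ[Λ] Λ), g.comp (dd i).hom = 0 ↔
      ∃ h : Q (i + 1 + 1) →ₗ[Λ] Λ, h.comp (dd (i + 1)).hom = g)
    (hUiso : Nonempty (U ≃ₗ[Λ] LinearMap.ker (dd 0).hom))
    (hperp : ∀ i : ℤ, MemPerpRing Γ (BTensor Λ N ↥(LinearMap.ker (dd i).hom)))
    (hNQ : ∀ i, Module.Projective Γ (BTensor Λ N (Q i))) :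
    IsGorensteinProj Γ (BTensor Λ N U) := by
  classical
  let D : ∀ j : ℤ, BTensor Λ N (Q j) →ₗ[Γ] BTensor Λ N (Q (j+1)) :=
    fun j => m2G Γ (NN := N) (dd j).hom
  have ExactD : ∀ j : ℤ, LinearMap.range (D j) = LinearMap.ker (D (j+1)) := fun j =>
    flat_exact_G hN (dd j).hom (dd (j+1)).hom (hQex j)
  refine ⟨fun j => ModuleCat.of Γ (BTensor Λ N (Q j)), fun j => ModuleCat.ofHom (D j),
    fun j => hNQ j, ExactD, ?_, ?_⟩
  · -- the dual exactness condition
    intro i g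
    constructor
    · intro hg0
      -- the corestricted differential
      let c : ↥(Q (i+1+1)) →ₗ[Λ] ↥(LinearMap.ker (dd (i+1+1+1)).hom) :=
        LinearMap.codRestrict _ (dd (i+1+1)).hom (fun x => by
          rw [← hQex (i+1+1)]
          exact LinearMap.mem_range_self _ x)
      have hcsub : (LinearMap.ker (dd (i+1+1+1)).hom).subtype ∘ₗ c = (dd (i+1+1)).hom :=
        LinearMap.ext fun x => rfl
      have hcsur : Function.Surjective c := by
        rintro ⟨y, hy⟩
        rw [← hQex (i+1+1)] at hy
        obtain ⟨x, hx⟩ := hy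
        exact ⟨x, Subtype.ext hx⟩
      let ε : BTensor Λ N (Q (i+1+1)) →ₗ[Γ] BTensor Λ N ↥(LinearMap.ker (dd (i+1+1+1)).hom) :=
        m2G Γ (NN := N) c
      have hεsur : Function.Surjective ε := m2G_surjective c hcsur
      have hinj2 : Function.Injective
          (m2G Γ (NN := N) (LinearMap.ker (dd (i+1+1+1)).hom).subtype) :=
        flat_injective_G hN _ (Submodule.ker_subtype _)
      have hfact : ∀ z, D (i+1+1) z =
          m2G Γ (NN := N) (LinearMap.ker (dd (i+1+1+1)).hom).subtype (ε z) := fun z => by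
        show m2G Γ (NN := N) (dd (i+1+1)).hom z = _
        rw [← m2G_comp_apply, hcsub]
      have hkerε : LinearMap.ker ε = LinearMap.ker (D (i+1+1)) := by
        ext x
        constructor
        · intro hx
          have h0 : ε x = 0 := (LinearMap.mem_ker (f := ε)).mp hx
          exact (LinearMap.mem_ker (f := D (i+1+1))).mpr (by rw [hfact, h0, map_zero])
        · intro hx
          have h0 : m2G Γ (NN := N) (LinearMap.ker (dd (i+1+1+1)).hom).subtype (ε x) = 0 := by
            rw [← hfact]
            exact (LinearMap.mem_ker (f := D (i+1+1))).mp hx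
          exact (LinearMap.mem_ker (f := ε)).mpr (hinj2 (by rw [h0, map_zero]))
      -- the ℕ-indexed projective resolution
      let idx : ℕ → ℤ := fun n => match n with
        | 0 => i+1+1
        | 1 => i+1
        | (m+2) => i - m
      have hidx : ∀ n : ℕ, idx (n+1) + 1 = idx n := by
        intro n
        match n with
        | 0 => rfl
        | 1 => show (i - ((0:ℕ):ℤ)) + 1 = i + 1; push_cast; ring
        | (m+2) => show (i - ((m+1:ℕ):ℤ)) + 1 = i - (m:ℤ); push_cast; ring
      let P : ℕ → ModuleCat Γ := fun n => ModuleCat.of Γ (BTensor Λ N (Q (idx n)))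
      let d : ∀ n : ℕ, P (n+1) ⟶ P n := fun n => ModuleCat.ofHom <|
        (mcast (R := Γ) (T := fun j => BTensor Λ N (Q j)) (hidx n)).toLinearMap ∘ₗ
          D (idx (n+1))
      have HR : ∀ (a b : ℤ) (h1 : a + 1 = b),
          LinearMap.range ((mcast (R := Γ) (T := fun j => BTensor Λ N (Q j))
            h1).toLinearMap ∘ₗ D a) = LinearMap.ker (D b) := by
        intro a b h1
        subst h1
        rw [mcast_rfl]
        simp only [LinearEquiv.refl_toLinearMap, LinearMap.id_comp]
        exact ExactD a
      have HRK : ∀ (a b c' : ℤ) (h1 : a + 1 = b) (h2 : b + 1 = c'),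
          LinearMap.range ((mcast (R := Γ) (T := fun j => BTensor Λ N (Q j))
            h1).toLinearMap ∘ₗ D a) =
          LinearMap.ker ((mcast (R := Γ) (T := fun j => BTensor Λ N (Q j))
            h2).toLinearMap ∘ₗ D b) := by
        intro a b c' h1 h2
        subst h1
        subst h2
        rw [mcast_rfl, mcast_rfl]
        simp only [LinearEquiv.refl_toLinearMap, LinearMap.id_comp]
        exact ExactD a
      have hres : IsProjResolution Γ (BTensor Λ N ↥(LinearMap.ker (dd (i+1+1+1)).hom)) P d (ModuleCat.ofHom ε) :=
        ⟨fun n => hNQ (idx n), hεsur, (HR (i+1) (i+1+1) (hidx 0)).trans hkerε.symm,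
          fun n => HRK (idx (n+2)) (idx (n+1)) (idx n) (hidx (n+1)) (hidx n)⟩
      have hg1 : g.comp (d 1).hom = 0 := by
        have hgen : ∀ (a : ℤ) (h1 : a + 1 = i + 1),
            g ∘ₗ ((mcast (R := Γ) (T := fun j => BTensor Λ N (Q j))
              h1).toLinearMap ∘ₗ D a) = 0 := by
          intro a h1
          obtain rfl : a = i := by omega
          rw [show (mcast (R := Γ) (T := fun j => BTensor Λ N (Q j)) h1) =
            LinearEquiv.refl Γ (BTensor Λ N (Q (a+1))) from rfl]
          simp only [LinearEquiv.refl_toLinearMap, LinearMap.id_comp]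
          exact hg0
        exact hgen (i - ((0:ℕ):ℤ)) (hidx 1)
      obtain ⟨h, hh⟩ := hperp (i+1+1+1) 0 P d (ModuleCat.ofHom ε) hres g hg1
      refine ⟨h, ?_⟩
      rw [← hh]
      exact LinearMap.ext fun x => rfl
    · rintro ⟨h, rfl⟩
      ext x
      have hmem : D i x ∈ LinearMap.ker (D (i+1)) := by
        rw [← ExactD i]
        exact ⟨x, rfl⟩
      have hx0 : D (i+1) (D i x) = 0 := (LinearMap.mem_ker (f := D (i+1))).mp hmem
      show h (D (i+1) (D i x)) = 0
      rw [hx0, map_zero]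
  · -- the isomorphism with the cycle module
    obtain ⟨e0⟩ := hUiso
    have hrange : LinearMap.range (m2G Γ (NN := N) (LinearMap.ker (dd 0).hom).subtype) =
        LinearMap.ker (D 0) :=
      flat_exact_G hN _ (dd 0).hom (Submodule.range_subtype _)
    have hinj : Function.Injective (m2G Γ (NN := N) (LinearMap.ker (dd 0).hom).subtype) :=
      flat_injective_G hN _ (Submodule.ker_subtype _)
    exact ⟨(m2GE Γ (NN := N) e0).trans ((LinearEquiv.ofInjective _ hinj).trans
      (LinearEquiv.ofEq _ _ hrange))⟩
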